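/- Let ρ be a two-qubit Schmidt-correlated state with coefficients c1, c2, c4 satisfying c1 ≠ c4, and let U1, U2 be 2×2 unitary matrices such that (U1⊗U2) ρ (U1⊗U2)† is again of Schmidt-correlated form. Then either U1 and U2 are both diagonal matrices, or U1 and U2 are both antidiagonal matrices (i.e., both have zero diagonal entries). -/

import Mathlib

open Matrix Kronecker

/-- The two-qubit Schmidt-correlated state
`ρ = c1|00⟩⟨00| + c2|00⟩⟨11| + conj(c2)|11⟩⟨00| + c4|11⟩⟨11|`. -/
noncomputable def scState (c1 c4 : ℝ) (c2 : ℂ) :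
    Matrix (Fin 2 × Fin 2) (Fin 2 × Fin 2) ℂ :=
  Matrix.of fun p q =>
    if p = (0, 0) ∧ q = (0, 0) then (c1 : ℂ)
    else if p = (0, 0) ∧ q = (1, 1) then c2
    else if p = (1, 1) ∧ q = (0, 0) then (starRingEnd ℂ) c2
    else if p = (1, 1) ∧ q = (1, 1) then (c4 : ℂ)
    else 0

/-- A 4×4 matrix is of Schmidt-correlated form if its only possibly nonzero entries
are in the rows/columns indexed by `|00⟩` and `|11⟩`. -/
def IsSCform (M : Matrix (Fin 2 × Fin 2) (Fin 2 × Fin 2) ℂ) : Prop :=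
  ∀ p q, M p q ≠ 0 → (p = (0, 0) ∨ p = (1, 1)) ∧ (q = (0, 0) ∨ q = (1, 1))

private lemma rho_apply (c1 c4 : ℝ) (c2 : ℂ) (U1 U2 : Matrix (Fin 2) (Fin 2) ℂ) (p q : Fin 2 × Fin 2) :
    ((U1 ⊗ₖ U2) * scState c1 c4 c2 * (U1 ⊗ₖ U2)ᴴ) p q =
      (c1:ℂ) * (U1 p.1 0 * U2 p.2 0) * ((starRingEnd ℂ) (U1 q.1 0) * (starRingEnd ℂ) (U2 q.2 0))
      + c2 * (U1 p.1 0 * U2 p.2 0) * ((starRingEnd ℂ) (U1 q.1 1) * (starRingEnd ℂ) (U2 q.2 1))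
      + (starRingEnd ℂ) c2 * (U1 p.1 1 * U2 p.2 1) * ((starRingEnd ℂ) (U1 q.1 0) * (starRingEnd ℂ) (U2 q.2 0))
      + (c4:ℂ) * (U1 p.1 1 * U2 p.2 1) * ((starRingEnd ℂ) (U1 q.1 1) * (starRingEnd ℂ) (U2 q.2 1)) := by
  simp [Matrix.mul_apply, Fintype.sum_prod_type, Fin.sum_univ_two, scState,
    Matrix.conjTranspose_apply, Matrix.kroneckerMap_apply, Prod.mk.injEq, _root_.map_mul]
  ring

/-- If `c1 ≠ c4` and the local unitary image of an SC state is again of SC form, then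
`U1` and `U2` are both diagonal, or both antidiagonal. -/
theorem sc_form_diag_or_antidiag (c1 c4 : ℝ) (c2 : ℂ)
    (hc1 : 0 ≤ c1) (hc4 : 0 ≤ c4) (hsum : c1 + c4 = 1)
    (hc2 : ‖c2‖ ^ 2 ≤ c1 * c4) (hne : c1 ≠ c4)
    (U1 U2 : Matrix (Fin 2) (Fin 2) ℂ)
    (hU1 : U1 ∈ Matrix.unitaryGroup (Fin 2) ℂ) (hU2 : U2 ∈ Matrix.unitaryGroup (Fin 2) ℂ)
    (hform : IsSCform ((U1 ⊗ₖ U2) * scState c1 c4 c2 * (U1 ⊗ₖ U2)ᴴ)) :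
    (U1 0 1 = 0 ∧ U1 1 0 = 0 ∧ U2 0 1 = 0 ∧ U2 1 0 = 0) ∨
    (U1 0 0 = 0 ∧ U1 1 1 = 0 ∧ U2 0 0 = 0 ∧ U2 1 1 = 0) := by
  have hU1a : star U1 * U1 = 1 := hU1.1
  have hU1b : U1 * star U1 = 1 := hU1.2
  have hU2a : star U2 * U2 = 1 := hU2.1
  have hU2b : U2 * star U2 = 1 := hU2.2
  have ent : ∀ (M N : Matrix (Fin 2) (Fin 2) ℂ) (i j : Fin 2), M = N → (M : Matrix _ _ ℂ) i j = N i j := by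
    intro M N i j hMN; rw [hMN]
  have r0U1 : U1 0 0 * (starRingEnd ℂ) (U1 0 0) + U1 0 1 * (starRingEnd ℂ) (U1 0 1) = 1 := by
    have := ent _ _ 0 0 hU1b
    simpa [Matrix.mul_apply, Fin.sum_univ_two, Matrix.star_apply, Matrix.one_apply] using this
  have r1U1 : U1 1 0 * (starRingEnd ℂ) (U1 1 0) + U1 1 1 * (starRingEnd ℂ) (U1 1 1) = 1 := by
    have := ent _ _ 1 1 hU1b
    simpa [Matrix.mul_apply, Fin.sum_univ_two, Matrix.star_apply, Matrix.one_apply] using this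
  have roU1 : U1 0 0 * (starRingEnd ℂ) (U1 1 0) + U1 0 1 * (starRingEnd ℂ) (U1 1 1) = 0 := by
    have := ent _ _ 0 1 hU1b
    simpa [Matrix.mul_apply, Fin.sum_univ_two, Matrix.star_apply, Matrix.one_apply] using this
  have c0U1 : (starRingEnd ℂ) (U1 0 0) * U1 0 0 + (starRingEnd ℂ) (U1 1 0) * U1 1 0 = 1 := by
    have := ent _ _ 0 0 hU1a
    simpa [Matrix.mul_apply, Fin.sum_univ_two, Matrix.star_apply, Matrix.one_apply] using this
  have c1U1 : (starRingEnd ℂ) (U1 0 1) * U1 0 1 + (starRingEnd ℂ) (U1 1 1) * U1 1 1 = 1 := by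
    have := ent _ _ 1 1 hU1a
    simpa [Matrix.mul_apply, Fin.sum_univ_two, Matrix.star_apply, Matrix.one_apply] using this
  have coU1 : (starRingEnd ℂ) (U1 0 0) * U1 0 1 + (starRingEnd ℂ) (U1 1 0) * U1 1 1 = 0 := by
    have := ent _ _ 0 1 hU1a
    simpa [Matrix.mul_apply, Fin.sum_univ_two, Matrix.star_apply, Matrix.one_apply] using this
  have r0U2 : U2 0 0 * (starRingEnd ℂ) (U2 0 0) + U2 0 1 * (starRingEnd ℂ) (U2 0 1) = 1 := by
    have := ent _ _ 0 0 hU2b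
    simpa [Matrix.mul_apply, Fin.sum_univ_two, Matrix.star_apply, Matrix.one_apply] using this
  have r1U2 : U2 1 0 * (starRingEnd ℂ) (U2 1 0) + U2 1 1 * (starRingEnd ℂ) (U2 1 1) = 1 := by
    have := ent _ _ 1 1 hU2b
    simpa [Matrix.mul_apply, Fin.sum_univ_two, Matrix.star_apply, Matrix.one_apply] using this
  have roU2 : U2 0 0 * (starRingEnd ℂ) (U2 1 0) + U2 0 1 * (starRingEnd ℂ) (U2 1 1) = 0 := by
    have := ent _ _ 0 1 hU2b
    simpa [Matrix.mul_apply, Fin.sum_univ_two, Matrix.star_apply, Matrix.one_apply] using this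
  have c0U2 : (starRingEnd ℂ) (U2 0 0) * U2 0 0 + (starRingEnd ℂ) (U2 1 0) * U2 1 0 = 1 := by
    have := ent _ _ 0 0 hU2a
    simpa [Matrix.mul_apply, Fin.sum_univ_two, Matrix.star_apply, Matrix.one_apply] using this
  have c1U2 : (starRingEnd ℂ) (U2 0 1) * U2 0 1 + (starRingEnd ℂ) (U2 1 1) * U2 1 1 = 1 := by
    have := ent _ _ 1 1 hU2a
    simpa [Matrix.mul_apply, Fin.sum_univ_two, Matrix.star_apply, Matrix.one_apply] using this
  have coU2 : (starRingEnd ℂ) (U2 0 0) * U2 0 1 + (starRingEnd ℂ) (U2 1 0) * U2 1 1 = 0 := by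
    have := ent _ _ 0 1 hU2a
    simpa [Matrix.mul_apply, Fin.sum_univ_two, Matrix.star_apply, Matrix.one_apply] using this
  have coU1' : U1 0 0 * (starRingEnd ℂ) (U1 0 1) + U1 1 0 * (starRingEnd ℂ) (U1 1 1) = 0 := by
    have := congrArg (starRingEnd ℂ) coU1
    simpa [map_add, _root_.map_mul, Complex.conj_conj, mul_comm] using this
  have coU2' : U2 0 0 * (starRingEnd ℂ) (U2 0 1) + U2 1 0 * (starRingEnd ℂ) (U2 1 1) = 0 := by
    have := congrArg (starRingEnd ℂ) coU2
    simpa [map_add, _root_.map_mul, Complex.conj_conj, mul_comm] using this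
  have hz : ∀ p q : Fin 2 × Fin 2,
      ¬((p = (0,0) ∨ p = (1,1)) ∧ (q = (0,0) ∨ q = (1,1))) →
      ((U1 ⊗ₖ U2) * scState c1 c4 c2 * (U1 ⊗ₖ U2)ᴴ) p q = 0 := by
    intro p q hpq
    by_contra hcon
    exact hpq (hform p q hcon)
  have hz1 := hz (0,0) (1,0) (by decide)
  have hz2 := hz (0,1) (1,1) (by decide)
  have hz3 := hz (0,0) (0,1) (by decide)
  have hz4 := hz (1,0) (1,1) (by decide)
  have hz5 := hz (0,1) (0,1) (by decide)
  have hz6 := hz (1,0) (1,0) (by decide)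
  rw [rho_apply] at hz1 hz2 hz3 hz4 hz5 hz6
  simp only [] at hz1 hz2 hz3 hz4 hz5 hz6
  set a := U1 0 0 with ha'
  set b := U1 0 1 with hb'
  set c := U1 1 0 with hc'
  set d := U1 1 1 with hd'
  set e := U2 0 0 with he'
  set f := U2 0 1 with hf'
  set g := U2 1 0 with hg'
  set h := U2 1 1 with hh'
  -- key equation for U1
  have E1 : (c1:ℂ) * (a * (starRingEnd ℂ) c) + (c4:ℂ) * (b * (starRingEnd ℂ) d) = 0 := by
    linear_combination hz1 + hz2 - c2 * a * (starRingEnd ℂ) d * coU2'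
      - (starRingEnd ℂ) c2 * b * (starRingEnd ℂ) c * coU2
      - (c1:ℂ) * a * (starRingEnd ℂ) c * c0U2 - (c4:ℂ) * b * (starRingEnd ℂ) d * c1U2
  have hneC : (c1:ℂ) ≠ (c4:ℂ) := by exact_mod_cast hne
  have hac : a * (starRingEnd ℂ) c = 0 := by
    have h0 : ((c1:ℂ) - c4) * (a * (starRingEnd ℂ) c) = 0 := by
      linear_combination E1 - (c4:ℂ) * roU1
    rcases mul_eq_zero.1 h0 with h0 | h0
    · exact absurd (sub_eq_zero.1 h0) hneC
    · exact h0
  have hbd : b * (starRingEnd ℂ) d = 0 := by linear_combination roU1 - hac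
  -- key equation for U2
  have E2 : (c1:ℂ) * (e * (starRingEnd ℂ) g) + (c4:ℂ) * (f * (starRingEnd ℂ) h) = 0 := by
    linear_combination hz3 + hz4 - c2 * e * (starRingEnd ℂ) h * coU1'
      - (starRingEnd ℂ) c2 * f * (starRingEnd ℂ) g * coU1
      - (c1:ℂ) * e * (starRingEnd ℂ) g * c0U1 - (c4:ℂ) * f * (starRingEnd ℂ) h * c1U1
  have heg : e * (starRingEnd ℂ) g = 0 := by
    have h0 : ((c1:ℂ) - c4) * (e * (starRingEnd ℂ) g) = 0 := by
      linear_combination E2 - (c4:ℂ) * roU2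
    rcases mul_eq_zero.1 h0 with h0 | h0
    · exact absurd (sub_eq_zero.1 h0) hneC
    · exact h0
  have hfh : f * (starRingEnd ℂ) h = 0 := by linear_combination roU2 - heg
  have cjz : ∀ z : ℂ, (starRingEnd ℂ) z = 0 → z = 0 := fun z hzz => by
    simpa using congrArg (starRingEnd ℂ) hzz
  -- U1 is diagonal or antidiagonal
  have hD1 : (b = 0 ∧ c = 0) ∨ (a = 0 ∧ d = 0) := by
    rcases mul_eq_zero.1 hac with h0 | h0
    · right
      have hb : b ≠ 0 := by
        intro hb0; rw [h0, hb0] at r0U1; simp at r0U1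
      rcases mul_eq_zero.1 hbd with h1 | h1
      · exact absurd h1 hb
      · exact ⟨h0, cjz _ h1⟩
    · left
      have hc0 : c = 0 := cjz _ h0
      have hd : (starRingEnd ℂ) d ≠ 0 := by
        intro hd0; rw [hc0, hd0] at r1U1; simp at r1U1
      rcases mul_eq_zero.1 hbd with h1 | h1
      · exact ⟨h1, hc0⟩
      · exact absurd h1 hd
  have hD2 : (f = 0 ∧ g = 0) ∨ (e = 0 ∧ h = 0) := by
    rcases mul_eq_zero.1 heg with h0 | h0
    · right
      have hf : f ≠ 0 := by
        intro hf0; rw [h0, hf0] at r0U2; simp at r0U2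
      rcases mul_eq_zero.1 hfh with h1 | h1
      · exact absurd h1 hf
      · exact ⟨h0, cjz _ h1⟩
    · left
      have hg0 : g = 0 := cjz _ h0
      have hh : (starRingEnd ℂ) h ≠ 0 := by
        intro hh0; rw [hg0, hh0] at r1U2; simp at r1U2
      rcases mul_eq_zero.1 hfh with h1 | h1
      · exact ⟨h1, hg0⟩
      · exact absurd h1 hh
  have hsumC : (c1:ℂ) + c4 = 1 := by exact_mod_cast congrArg Complex.ofReal hsum
  rcases hD1 with ⟨hb0, hc0⟩ | ⟨ha0, hd0⟩
  · rcases hD2 with ⟨hf0, hg0⟩ | ⟨he0, hh0⟩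
    · exact Or.inl ⟨hb0, hc0, hf0, hg0⟩
    · exfalso
      have haa : a * (starRingEnd ℂ) a = 1 := by rw [hb0] at r0U1; simpa using r0U1
      have hdd : d * (starRingEnd ℂ) d = 1 := by rw [hc0] at r1U1; simpa using r1U1
      have hgg : (starRingEnd ℂ) g * g = 1 := by rw [he0] at c0U2; simpa using c0U2
      have hff : (starRingEnd ℂ) f * f = 1 := by rw [hh0] at c1U2; simpa using c1U2
      simp only [hb0, map_zero, mul_zero, zero_mul, add_zero, zero_add] at hz5
      simp only [hc0, map_zero, mul_zero, zero_mul, add_zero, zero_add] at hz6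
      have h1 : (c1:ℂ) = 0 := by
        calc (c1:ℂ) = (c1:ℂ) * (a * (starRingEnd ℂ) a) * ((starRingEnd ℂ) g * g) := by
              rw [haa, hgg]; ring
        _ = 0 := by linear_combination hz5
      have h4 : (c4:ℂ) = 0 := by
        calc (c4:ℂ) = (c4:ℂ) * (d * (starRingEnd ℂ) d) * ((starRingEnd ℂ) f * f) := by
              rw [hdd, hff]; ring
        _ = 0 := by linear_combination hz6
      rw [h1, h4] at hsumC; simp at hsumC
  · rcases hD2 with ⟨hf0, hg0⟩ | ⟨he0, hh0⟩
    · exfalso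
      have hbb : b * (starRingEnd ℂ) b = 1 := by rw [ha0] at r0U1; simpa using r0U1
      have hcc : c * (starRingEnd ℂ) c = 1 := by rw [hd0] at r1U1; simpa using r1U1
      have hee : (starRingEnd ℂ) e * e = 1 := by rw [hg0] at c0U2; simpa using c0U2
      have hhh : (starRingEnd ℂ) h * h = 1 := by rw [hf0] at c1U2; simpa using c1U2
      simp only [ha0, map_zero, mul_zero, zero_mul, add_zero, zero_add] at hz5
      simp only [hd0, hf0, map_zero, mul_zero, zero_mul, add_zero, zero_add] at hz6
      have h4 : (c4:ℂ) = 0 := by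
        calc (c4:ℂ) = (c4:ℂ) * (b * (starRingEnd ℂ) b) * ((starRingEnd ℂ) h * h) := by
              rw [hbb, hhh]; ring
        _ = 0 := by linear_combination hz5
      have h1 : (c1:ℂ) = 0 := by
        calc (c1:ℂ) = (c1:ℂ) * (c * (starRingEnd ℂ) c) * ((starRingEnd ℂ) e * e) := by
              rw [hcc, hee]; ring
        _ = 0 := by linear_combination hz6
      rw [h1, h4] at hsumC; simp at hsumC
    · exact Or.inr ⟨ha0, hd0, he0, hh0⟩
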